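/- Suppose N is even, N ≥ 2n, r ∈ ℱ, and let x* be any element of X̃(r). Then {x ∈ ℝ^N : S̃x = r and x_k = x_{N−k} for 1 ≤ k ≤ N−1} = {x* + Σ_{m=n}^{N/2} c_m ξ_m : c_n, …, c_{N/2} ∈ ℝ}, and the vectors ξ_n, …, ξ_{N/2} are linearly independent over ℝ; hence this solution set is an affine subspace of ℝ^N of dimension N/2 − n + 1. -/

import Mathlib

open scoped BigOperators
open Complex Matrix

noncomputable section

/-- Circular autocovariance: `r i = ∑ t, u t * u ((t - i) mod N)`. -/
def autocov (N n : ℕ) (u : Fin N → ℝ) : Fin n → ℝ :=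
  fun i => ∑ t : Fin N, u t * u ⟨(t.val + (N - i.val)) % N, Nat.mod_lt _ t.pos⟩

/-- The DFT matrix `W̃` with entries `N^{-1/2} e^{-j ϖ k t}`, `ϖ = 2π/N`. -/
def dft (N : ℕ) : Matrix (Fin N) (Fin N) ℂ := fun k t =>
  (Real.sqrt N : ℂ)⁻¹ * Complex.exp (-(Complex.I * (2 * Real.pi / N) * k.val * t.val))

/-- The matrix `S̃` with entries `e^{j ϖ i k}`. -/
def Stilde (N n : ℕ) : Matrix (Fin n) (Fin N) ℂ := fun i k =>
  Complex.exp (Complex.I * (2 * Real.pi / N) * i.val * k.val)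

/-- The matrix `S̃(γ)` with entries `γ e^{-j ϖ i k} + (1-γ) e^{j ϖ i k}`. -/
def StildeG (N n : ℕ) (γ : ℂ) : Matrix (Fin n) (Fin N) ℂ := fun i k =>
  γ * Complex.exp (-(Complex.I * (2 * Real.pi / N) * i.val * k.val)) +
    (1 - γ) * Complex.exp (Complex.I * (2 * Real.pi / N) * i.val * k.val)

/-- The real matrix `S` with entries `cos(ϖ i k)`. -/
def Smat (N n : ℕ) : Matrix (Fin n) (Fin N) ℝ := fun i k =>
  Real.cos (2 * Real.pi / N * i.val * k.val)

/-- `ξ_m = (1, cos(mϖ), …, cos((N-1)mϖ))`. -/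
def xi (N m : ℕ) : Fin N → ℝ := fun t => Real.cos (t.val * m * (2 * Real.pi / N))

/-- `ζ_m = (0, sin(mϖ), …, sin((N-1)mϖ))`. -/
def zeta (N m : ℕ) : Fin N → ℝ := fun t => Real.sin (t.val * m * (2 * Real.pi / N))

/-- The orthogonal matrix `W` whose columns are
`√(2/N)·[ξ_0/√2, ξ_1, …, ξ_{N/2-1}, ξ_{N/2}/√2, ζ_{N/2-1}, …, ζ_1]` for even `N` and
`√(2/N)·[ξ_0/√2, ξ_1, …, ξ_{(N-1)/2}, ζ_{(N-1)/2}, …, ζ_1]` for odd `N`. -/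
def Wmat (N : ℕ) : Matrix (Fin N) (Fin N) ℝ := fun t c =>
  Real.sqrt (2 / N) *
    (if 2 * c.val ≤ N then
      (if c.val = 0 ∨ 2 * c.val = N then (Real.sqrt 2)⁻¹ else 1) * xi N c.val t
    else zeta N (N - c.val) t)

/-- The cyclic shift (unit delay) matrix: `A t s = 1` iff `t ≡ s + 1 (mod N)`. -/
def shiftA (N : ℕ) : Matrix (Fin N) (Fin N) ℝ := fun t s =>
  if (s.val + 1) % N = t.val then 1 else 0

/-- The set `X̃(r)` of real vectors `x` with `S̃ x = r`, nonnegative entries,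
and the symmetry `x_k = x_{N-k}` for `1 ≤ k ≤ N-1`. -/
def Xset (N n : ℕ) (r : Fin n → ℝ) : Set (Fin N → ℝ) :=
  {x | (Stilde N n).mulVec (fun k => (x k : ℂ)) = (fun i => (r i : ℂ)) ∧
    (∀ k, 0 ≤ x k) ∧
    (∀ k : Fin N, ∀ hk : 1 ≤ k.val, x k = x ⟨N - k.val, Nat.sub_lt k.pos hk⟩)}

/-- The set `ℱ = {f(u) : uᵀu = C}` of attainable autocovariances. -/
def Fset (N n : ℕ) (C : ℝ) : Set (Fin n → ℝ) :=
  {r | ∃ u : Fin N → ℝ, (∑ t, u t * u t) = C ∧ autocov N n u = r}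

/-- Membership in the family `Λ_Q` (for even `N`): diagonal entries `1` at positions `0`
and `N/2`, arbitrary `2×2` unitary blocks at index pairs `{i, N-i}` for `1 ≤ i ≤ N/2-1`,
and all other entries zero. -/
def memLamQ {N : ℕ} (L : Matrix (Fin N) (Fin N) ℂ) : Prop :=
  (∀ a : Fin N, a.val = 0 → L a a = 1) ∧
  (∀ a : Fin N, 2 * a.val = N → L a a = 1) ∧
  (∀ a b : Fin N, 1 ≤ a.val → 2 * a.val < N → a.val + b.val = N →
    (!![L a a, L a b; L b a, L b b]ᴴ * !![L a a, L a b; L b a, L b b] = 1 ∧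
      !![L a a, L a b; L b a, L b b] * !![L a a, L a b; L b a, L b b]ᴴ = 1)) ∧
  (∀ a b : Fin N, ¬(a = b ∨ a.val + b.val = N) → L a b = 0)


section Aux

open Finset

lemma expSum (N : ℕ) (hN : 0 < N) (ℓ : ℤ) :
    ∑ k : Fin N, Complex.exp (Complex.I * (2 * Real.pi / N) * ℓ * k) =
      if (N : ℤ) ∣ ℓ then (N : ℂ) else 0 := by
  have hNC : (N : ℂ) ≠ 0 := Nat.cast_ne_zero.2 hN.ne'
  have hπ : (Real.pi : ℂ) ≠ 0 := by exact_mod_cast Real.pi_ne_zero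
  by_cases hd : (N : ℤ) ∣ ℓ
  · obtain ⟨q, rfl⟩ := hd
    rw [if_pos (Dvd.intro q rfl)]
    have h1 : ∀ k : Fin N, Complex.exp (Complex.I * (2 * Real.pi / N) * (((N : ℤ) * q : ℤ) : ℂ) * k) = 1 := by
      intro k
      rw [Complex.exp_eq_one_iff]
      exact ⟨q * k, by push_cast; field_simp⟩
    push_cast at h1
    simp [h1]
  · rw [if_neg hd]
    set ζ := Complex.exp (Complex.I * (2 * Real.pi / N) * ℓ) with hζ
    have hterm : ∀ k : Fin N, Complex.exp (Complex.I * (2 * Real.pi / N) * ℓ * k) = ζ ^ (k : ℕ) := by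
      intro k
      rw [hζ, ← Complex.exp_nat_mul]
      ring_nf
    have hζN : ζ ^ N = 1 := by
      rw [hζ, ← Complex.exp_nat_mul, Complex.exp_eq_one_iff]
      exact ⟨ℓ, by push_cast; field_simp⟩
    have hζ1 : ζ ≠ 1 := by
      rw [hζ, Ne, Complex.exp_eq_one_iff]
      rintro ⟨q, hq⟩
      apply hd
      refine ⟨q, ?_⟩
      have : (ℓ : ℂ) = N * q := by
        field_simp at hq
        have h2 : (2 : ℂ) * Real.pi * Complex.I ≠ 0 := by
          simp [Complex.I_ne_zero, hπ]
        apply mul_left_cancel₀ h2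
        linear_combination (2 * (Real.pi : ℂ) * Complex.I) * hq
      exact_mod_cast this
    simp only [hterm]
    rw [Fin.sum_univ_eq_sum_range, geom_sum_eq hζ1, hζN]
    simp

lemma cosSum (N : ℕ) (hN : 0 < N) (ℓ : ℤ) :
    ∑ k : Fin N, Real.cos (2 * Real.pi / N * ℓ * k) =
      if (N : ℤ) ∣ ℓ then (N : ℝ) else 0 := by
  have h := congrArg Complex.re (expSum N hN ℓ)
  rw [Complex.re_sum] at h
  have hterm : ∀ k : Fin N,
      (Complex.exp (Complex.I * (2 * Real.pi / N) * ℓ * k)).re =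
        Real.cos (2 * Real.pi / N * ℓ * k) := by
    intro k
    rw [show Complex.I * (2 * Real.pi / N) * ℓ * k =
        ((2 * Real.pi / N * ℓ * k : ℝ) : ℂ) * Complex.I by push_cast; ring]
    exact Complex.exp_ofReal_mul_I_re _
  simp only [hterm] at h
  rw [h]
  split <;> simp

lemma cos_prod (a b : ℝ) : Real.cos a * Real.cos b = (Real.cos (a + b) + Real.cos (a - b)) / 2 := by
  rw [Real.cos_add, Real.cos_sub]; ring

lemma cos_fold (N a : ℕ) (hN : 0 < N) (m : ℕ) (h2 : m ≤ N) :
    Real.cos ((a : ℝ) * ((N - m : ℕ) : ℝ) * (2 * Real.pi / N)) =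
      Real.cos ((a : ℝ) * m * (2 * Real.pi / N)) := by
  have hNR : (N : ℝ) ≠ 0 := Nat.cast_ne_zero.2 hN.ne'
  have harg : (a : ℝ) * ((N - m : ℕ) : ℝ) * (2 * Real.pi / N) =
      (a : ℝ) * (2 * Real.pi) - (a : ℝ) * m * (2 * Real.pi / N) := by
    rw [Nat.cast_sub h2]; field_simp
  rw [harg, Real.cos_nat_mul_two_pi_sub]

lemma prodCosSum (N : ℕ) (hN : 0 < N) (a b : ℕ) :
    ∑ m ∈ range N, Real.cos ((a : ℝ) * m * (2 * Real.pi / N)) *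
        Real.cos ((b : ℝ) * m * (2 * Real.pi / N)) =
      ((if (N : ℤ) ∣ ((a : ℤ) + b) then (N : ℝ) else 0) +
        (if (N : ℤ) ∣ ((a : ℤ) - b) then (N : ℝ) else 0)) / 2 := by
  have hterm : ∀ m : ℕ,
      Real.cos ((a : ℝ) * m * (2 * Real.pi / N)) * Real.cos ((b : ℝ) * m * (2 * Real.pi / N)) =
        (Real.cos (2 * Real.pi / N * (((a : ℤ) + b : ℤ) : ℝ) * m) +
          Real.cos (2 * Real.pi / N * (((a : ℤ) - b : ℤ) : ℝ) * m)) / 2 := by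
    intro m
    rw [cos_prod]
    congr 2
    · congr 1; push_cast; ring
    · congr 1; push_cast; ring
  simp only [hterm]
  rw [← Finset.sum_div, Finset.sum_add_distrib]
  rw [← Fin.sum_univ_eq_sum_range (fun m => Real.cos (2 * Real.pi / N * (((a : ℤ) + b : ℤ) : ℝ) * m)) N]
  rw [← Fin.sum_univ_eq_sum_range (fun m => Real.cos (2 * Real.pi / N * (((a : ℤ) - b : ℤ) : ℝ) * m)) N]
  rw [cosSum N hN ((a : ℤ) + b), cosSum N hN ((a : ℤ) - b)]

lemma dvd_small (N a : ℕ) (hN : 0 < N) (ha : a < 2 * N) (h : N ∣ a) : a = 0 ∨ a = N := by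
  obtain ⟨q, rfl⟩ := h
  have : q < 2 := by by_contra h'; push_neg at h'; nlinarith
  interval_cases q <;> omega

lemma foldSum (N : ℕ) (hN : 0 < N) (f : ℕ → ℝ)
    (hsym : ∀ m, 1 ≤ m → m < N → f (N - m) = f m) :
    ∑ m ∈ range N, f m =
      ∑ m ∈ Icc 0 (N / 2), (if m = 0 ∨ 2 * m = N then (1 : ℝ) else 2) * f m := by
  have hsplit : range N = Icc 0 (N / 2) ∪ Ioo (N / 2) N := by
    ext m; simp only [mem_range, mem_union, mem_Icc, mem_Ioo]; omega
  have hdisj : Disjoint (Icc 0 (N / 2)) (Ioo (N / 2) N) := by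
    rw [Finset.disjoint_left]; intro m hm hm'
    simp only [mem_Icc, mem_Ioo] at hm hm'; omega
  rw [hsplit, Finset.sum_union hdisj]
  have hio : ∑ m ∈ Ioo (N / 2) N, f m = ∑ m ∈ Ioo 0 (N - N / 2), f m := by
    apply Finset.sum_nbij' (fun m => N - m) (fun m => N - m)
    · intro a ha; simp only [mem_Ioo] at ha ⊢; omega
    · intro a ha; simp only [mem_Ioo] at ha ⊢; omega
    · intro a ha; simp only [mem_Ioo] at ha; omega
    · intro a ha; simp only [mem_Ioo] at ha; omega
    · intro a ha; simp only [mem_Ioo] at ha; exact (hsym a (by omega) (by omega)).symm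
  rw [hio]
  have hsub : Ioo 0 (N - N / 2) ⊆ Icc 0 (N / 2) := by
    intro m hm; simp only [mem_Ioo] at hm; simp only [mem_Icc]; omega
  have : ∑ m ∈ Icc 0 (N / 2), (if m = 0 ∨ 2 * m = N then (1 : ℝ) else 2) * f m =
      ∑ m ∈ Icc 0 (N / 2), (f m + (if m = 0 ∨ 2 * m = N then (0 : ℝ) else 1) * f m) := by
    apply Finset.sum_congr rfl; intro m _; split <;> ring
  rw [this, Finset.sum_add_distrib]
  congr 1
  rw [← Finset.sum_subset hsub]
  · apply Finset.sum_congr rfl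
    intro m hm; simp only [mem_Ioo] at hm
    rw [if_neg (by omega), one_mul]
  · intro m hm hm'
    simp only [mem_Icc] at hm; simp only [mem_Ioo] at hm'
    rw [if_pos (by omega), zero_mul]

lemma inversion (N : ℕ) (hN : 0 < N) (y : Fin N → ℝ)
    (hsym : ∀ k : Fin N, ∀ hk : 1 ≤ k.val, y k = y ⟨N - k.val, Nat.sub_lt k.pos hk⟩)
    (t : Fin N) :
    ∑ m ∈ Icc 0 (N / 2),
      ((if m = 0 ∨ 2 * m = N then (1 : ℝ) else 2) / N *
        ∑ k : Fin N, y k * Real.cos ((k.val : ℝ) * m * (2 * Real.pi / N))) *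
        Real.cos ((t.val : ℝ) * m * (2 * Real.pi / N)) = y t := by
  have hNR : (N : ℝ) ≠ 0 := Nat.cast_ne_zero.2 hN.ne'
  have step1 : ∑ m ∈ Icc 0 (N / 2),
      ((if m = 0 ∨ 2 * m = N then (1 : ℝ) else 2) / N *
        ∑ k : Fin N, y k * Real.cos ((k.val : ℝ) * m * (2 * Real.pi / N))) *
        Real.cos ((t.val : ℝ) * m * (2 * Real.pi / N)) =
      ∑ k : Fin N, y k / N *
        ∑ m ∈ Icc 0 (N / 2), (if m = 0 ∨ 2 * m = N then (1 : ℝ) else 2) *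
          (Real.cos ((k.val : ℝ) * m * (2 * Real.pi / N)) *
            Real.cos ((t.val : ℝ) * m * (2 * Real.pi / N))) := by
    calc ∑ m ∈ Icc 0 (N / 2),
        ((if m = 0 ∨ 2 * m = N then (1 : ℝ) else 2) / N *
          ∑ k : Fin N, y k * Real.cos ((k.val : ℝ) * m * (2 * Real.pi / N))) *
          Real.cos ((t.val : ℝ) * m * (2 * Real.pi / N))
        = ∑ m ∈ Icc 0 (N / 2), ∑ k : Fin N, y k / N *
            ((if m = 0 ∨ 2 * m = N then (1 : ℝ) else 2) *
              (Real.cos ((k.val : ℝ) * m * (2 * Real.pi / N)) *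
                Real.cos ((t.val : ℝ) * m * (2 * Real.pi / N)))) := by
          refine Finset.sum_congr rfl fun m _ => ?_
          rw [Finset.mul_sum, Finset.sum_mul]
          exact Finset.sum_congr rfl fun k _ => by ring
      _ = ∑ k : Fin N, ∑ m ∈ Icc 0 (N / 2), y k / N *
            ((if m = 0 ∨ 2 * m = N then (1 : ℝ) else 2) *
              (Real.cos ((k.val : ℝ) * m * (2 * Real.pi / N)) *
                Real.cos ((t.val : ℝ) * m * (2 * Real.pi / N)))) := Finset.sum_comm
      _ = _ := by
          refine Finset.sum_congr rfl fun k _ => ?_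
          rw [Finset.mul_sum]
  have inner : ∀ k : Fin N,
      ∑ m ∈ Icc 0 (N / 2), (if m = 0 ∨ 2 * m = N then (1 : ℝ) else 2) *
        (Real.cos ((k.val : ℝ) * m * (2 * Real.pi / N)) *
          Real.cos ((t.val : ℝ) * m * (2 * Real.pi / N))) =
      ((if (N : ℤ) ∣ ((k.val : ℤ) + t.val) then (N : ℝ) else 0) +
        (if (N : ℤ) ∣ ((k.val : ℤ) - t.val) then (N : ℝ) else 0)) / 2 := by
    intro k
    rw [← foldSum N hN (fun m => Real.cos ((k.val : ℝ) * m * (2 * Real.pi / N)) *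
        Real.cos ((t.val : ℝ) * m * (2 * Real.pi / N)))
        (fun m h1 h2 => by
          beta_reduce
          rw [cos_fold N k.val hN m h2.le, cos_fold N t.val hN m h2.le])]
    exact prodCosSum N hN k.val t.val
  have sumB : ∑ k : Fin N, y k * (if (N : ℤ) ∣ ((k.val : ℤ) - t.val) then (N : ℝ) else 0) =
      N * y t := by
    rw [Finset.sum_eq_single_of_mem t (Finset.mem_univ t)]
    · rw [if_pos (by simp)]; ring
    · intro k _ hk
      rw [if_neg, mul_zero]
      intro hdvd
      have h0 : (k.val : ℤ) - t.val = 0 := by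
        refine Int.eq_zero_of_abs_lt_dvd hdvd ?_
        have h1 := k.isLt; have h2 := t.isLt
        rw [abs_sub_lt_iff]; constructor <;> [skip; skip] <;> push_cast <;> omega
      apply hk; apply Fin.ext; omega
  have sumA : ∑ k : Fin N, y k * (if (N : ℤ) ∣ ((k.val : ℤ) + t.val) then (N : ℝ) else 0) =
      N * y t := by
    set i : Fin N := ⟨(N - t.val) % N, Nat.mod_lt _ hN⟩ with hi
    have hiv : i.val = (N - t.val) % N := rfl
    have h2t := t.isLt
    have hiv0 : t.val = 0 → i.val = 0 := fun h => by
      rw [hiv, h, Nat.sub_zero, Nat.mod_self]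
    have hiv1 : 1 ≤ t.val → i.val = N - t.val := fun h => by
      rw [hiv]; exact Nat.mod_eq_of_lt (by omega)
    rw [Finset.sum_eq_single_of_mem i (Finset.mem_univ i)]
    · have hdvd : (N : ℤ) ∣ ((i.val : ℤ) + t.val) := by
        have h2 := t.isLt
        rcases Nat.eq_zero_or_pos t.val with h0 | h0
        · rw [hiv0 h0, h0]; simp
        · rw [hiv1 h0]
          refine ⟨1, ?_⟩; push_cast; omega
      rw [if_pos hdvd]
      have hyy : y i = y t := by
        rcases Nat.eq_zero_or_pos t.val with h0 | h0
        · have : i = t := by apply Fin.ext; rw [hiv0 h0, h0]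
          rw [this]
        · have := hsym t h0
          rw [this]
          congr 1
          apply Fin.ext
          rw [hiv1 h0]
      rw [hyy]; ring
    · intro k _ hk
      rw [if_neg, mul_zero]
      intro hdvd
      have hnat : N ∣ (k.val + t.val) := by
        have : ((k.val + t.val : ℕ) : ℤ) = (k.val : ℤ) + t.val := by push_cast; ring
        exact_mod_cast this ▸ hdvd
      have h1 := k.isLt; have h2 := t.isLt
      rcases dvd_small N _ hN (by omega) hnat with h | h
      · apply hk; apply Fin.ext; rw [hiv0 (by omega)]; omega
      · apply hk; apply Fin.ext; rw [hiv1 (by omega)]; omega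
  rw [step1]
  have hfin : ∀ k : Fin N, y k / N *
      (∑ m ∈ Icc 0 (N / 2), (if m = 0 ∨ 2 * m = N then (1 : ℝ) else 2) *
        (Real.cos ((k.val : ℝ) * m * (2 * Real.pi / N)) *
          Real.cos ((t.val : ℝ) * m * (2 * Real.pi / N)))) =
      (y k * (if (N : ℤ) ∣ ((k.val : ℤ) + t.val) then (N : ℝ) else 0) +
        y k * (if (N : ℤ) ∣ ((k.val : ℤ) - t.val) then (N : ℝ) else 0)) / (2 * N) := by
    intro k; rw [inner k]; ring
  simp only [hfin]
  rw [← Finset.sum_div, Finset.sum_add_distrib, sumA, sumB]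
  field_simp
  ring

lemma rowReal (N n : ℕ) (y : Fin N → ℝ) (i : Fin n) :
    ((Stilde N n).mulVec (fun k => (y k : ℂ)) i).re
      = ∑ k : Fin N, y k * Real.cos ((k.val : ℝ) * (i.val : ℝ) * (2 * Real.pi / N)) := by
  simp only [Matrix.mulVec, dotProduct, Stilde]
  rw [Complex.re_sum]
  refine Finset.sum_congr rfl fun k _ => ?_
  rw [show Complex.I * (2 * Real.pi / N) * (i.val : ℂ) * (k.val : ℂ)
      = (((k.val : ℝ) * (i.val : ℝ) * (2 * Real.pi / N) : ℝ) : ℂ) * Complex.I by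
    push_cast; ring]
  rw [Complex.mul_re, Complex.exp_ofReal_mul_I_re, Complex.exp_ofReal_mul_I_im,
    Complex.ofReal_re, Complex.ofReal_im]
  ring

lemma Sxi_zero (N n : ℕ) (hN : 0 < N) (i : Fin n) (m : ℕ) (hmn : n ≤ m) (hm2 : 2 * m ≤ N)
    (h2n : 2 * n ≤ N) :
    ((Stilde N n).mulVec (fun k => ((xi N m k : ℝ) : ℂ))) i = 0 := by
  simp only [Matrix.mulVec, dotProduct, Stilde, xi]
  have hterm : ∀ k : Fin N,
      Complex.exp (Complex.I * (2 * Real.pi / N) * (i.val : ℂ) * (k.val : ℂ)) *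
        ((Real.cos ((k.val : ℝ) * m * (2 * Real.pi / N)) : ℝ) : ℂ) =
      (Complex.exp (Complex.I * (2 * Real.pi / N) * ((((i.val : ℤ) + m : ℤ)) : ℂ) * (k.val : ℂ)) +
        Complex.exp (Complex.I * (2 * Real.pi / N) * ((((i.val : ℤ) - m : ℤ)) : ℂ) * (k.val : ℂ))) / 2 := by
    intro k
    rw [Complex.ofReal_cos, Complex.cos]
    have expand : ∀ a b c : ℂ, Complex.exp a * ((Complex.exp b + Complex.exp c) / 2) =
        (Complex.exp (a + b) + Complex.exp (a + c)) / 2 := by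
      intro a b c; rw [Complex.exp_add, Complex.exp_add]; ring
    rw [expand]
    congr 2 <;> push_cast <;> ring
  rw [Finset.sum_congr rfl fun k _ => hterm k]
  rw [← Finset.sum_div, Finset.sum_add_distrib]
  have hnd2 : ¬ (N : ℤ) ∣ ((i.val : ℤ) - m) := by
    intro hdvd
    have hi := i.isLt
    have h0 := Int.eq_zero_of_abs_lt_dvd hdvd (by rw [abs_lt]; omega)
    omega
  have hnd1 : ¬ (N : ℤ) ∣ ((i.val : ℤ) + m) := by
    intro hdvd
    have hi := i.isLt
    have h0 := Int.eq_zero_of_abs_lt_dvd hdvd (by rw [abs_lt]; omega)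
    omega
  have e1 := expSum N hN ((i.val : ℤ) + m)
  have e2 := expSum N hN ((i.val : ℤ) - m)
  rw [if_neg hnd1] at e1
  rw [if_neg hnd2] at e2
  rw [e1, e2]
  simp

lemma xi_inner (N : ℕ) (hN : 0 < N) (m m' : ℕ) (hm1 : 1 ≤ m) (hm2 : 2 * m ≤ N)
    (hm'1 : 1 ≤ m') (hm'2 : 2 * m' ≤ N) :
    ∑ t : Fin N, xi N m t * xi N m' t =
      if m = m' then (if 2 * m = N then (N : ℝ) else N / 2) else 0 := by
  have hconv : ∑ t : Fin N, xi N m t * xi N m' t =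
      ∑ t ∈ range N, Real.cos ((m : ℝ) * t * (2 * Real.pi / N)) *
        Real.cos ((m' : ℝ) * t * (2 * Real.pi / N)) := by
    rw [← Fin.sum_univ_eq_sum_range]
    refine Finset.sum_congr rfl fun t _ => ?_
    simp only [xi]
    rw [mul_comm (m : ℝ) (t.val : ℝ), mul_comm (m' : ℝ) (t.val : ℝ)]
  rw [hconv, prodCosSum N hN m m']
  by_cases h : m = m'
  · subst h
    have hd2 : (N : ℤ) ∣ ((m : ℤ) - m) := by rw [sub_self]; exact dvd_zero _
    rw [if_pos hd2, if_pos rfl]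
    by_cases h2 : 2 * m = N
    · have hd1 : (N : ℤ) ∣ ((m : ℤ) + m) := ⟨1, by push_cast; omega⟩
      rw [if_pos hd1, if_pos h2]; ring
    · have hd1 : ¬ (N : ℤ) ∣ ((m : ℤ) + m) := by
        intro hdvd
        have := Int.eq_zero_of_abs_lt_dvd hdvd
          (by rw [abs_lt]; constructor <;> [skip; skip] <;> omega)
        omega
      rw [if_neg hd1, if_neg h2]; ring
  · have hd1 : ¬ (N : ℤ) ∣ ((m : ℤ) + m') := by
      intro hdvd
      have hdvd' : (N : ℤ) ∣ ((m : ℤ) + m' - N) := (Dvd.dvd.sub hdvd (dvd_refl _))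
      have := Int.eq_zero_of_abs_lt_dvd hdvd'
        (by rw [abs_lt]; constructor <;> [skip; skip] <;> omega)
      omega
    have hd2 : ¬ (N : ℤ) ∣ ((m : ℤ) - m') := by
      intro hdvd
      have := Int.eq_zero_of_abs_lt_dvd hdvd
        (by rw [abs_lt]; constructor <;> [skip; skip] <;> omega)
      omega
    rw [if_neg hd1, if_neg hd2, if_neg h]; ring

lemma xi_li (N n : ℕ) (hN : 0 < N) (hn : 1 ≤ n) :
    LinearIndependent ℝ (fun m : {m : ℕ // m ∈ Finset.Icc n (N / 2)} => xi N m.val) := by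
  rw [Fintype.linearIndependent_iff]
  intro g hg m0
  have hmem : ∀ i : {m : ℕ // m ∈ Finset.Icc n (N / 2)}, 1 ≤ i.val ∧ 2 * i.val ≤ N := by
    intro i
    have := i.property
    simp only [Finset.mem_Icc] at this
    omega
  have hdot := congrArg (fun v : Fin N → ℝ => ∑ t : Fin N, v t * xi N m0.val t) hg
  simp only [Finset.sum_apply, Pi.smul_apply, smul_eq_mul, Pi.zero_apply, zero_mul,
    Finset.sum_const_zero] at hdot
  have key : ∑ i : {m : ℕ // m ∈ Finset.Icc n (N / 2)},
      g i * ∑ t : Fin N, xi N i.val t * xi N m0.val t = 0 := by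
    calc ∑ i : {m : ℕ // m ∈ Finset.Icc n (N / 2)},
          g i * ∑ t : Fin N, xi N i.val t * xi N m0.val t
        = ∑ i : {m : ℕ // m ∈ Finset.Icc n (N / 2)}, ∑ t : Fin N,
            g i * (xi N i.val t * xi N m0.val t) := by
          exact Finset.sum_congr rfl fun i _ => Finset.mul_sum _ _ _
      _ = ∑ t : Fin N, ∑ i : {m : ℕ // m ∈ Finset.Icc n (N / 2)},
            g i * (xi N i.val t * xi N m0.val t) := Finset.sum_comm
      _ = ∑ t : Fin N, (∑ i : {m : ℕ // m ∈ Finset.Icc n (N / 2)},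
            g i * xi N i.val t) * xi N m0.val t := by
          refine Finset.sum_congr rfl fun t _ => ?_
          rw [Finset.sum_mul]
          exact Finset.sum_congr rfl fun i _ => by ring
      _ = 0 := hdot
  have hval : ∀ i : {m : ℕ // m ∈ Finset.Icc n (N / 2)},
      ∑ t : Fin N, xi N i.val t * xi N m0.val t =
        if i.val = m0.val then (if 2 * i.val = N then (N : ℝ) else N / 2) else 0 := fun i =>
    xi_inner N hN i.val m0.val (hmem i).1 (hmem i).2 (hmem m0).1 (hmem m0).2
  rw [Finset.sum_eq_single m0] at key
  · rw [hval m0, if_pos rfl] at key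
    rcases mul_eq_zero.mp key with h | h
    · exact h
    · exfalso
      have hNR : (0 : ℝ) < N := by exact_mod_cast hN
      split at h <;> linarith
  · intro i _ hi
    rw [hval i, if_neg (fun hv => hi (Subtype.ext hv)), mul_zero]
  · intro hm; exact absurd (Finset.mem_univ m0) hm

lemma xi_symm (N m : ℕ) (hN : 0 < N) (k : Fin N) (hk : 1 ≤ k.val) :
    xi N m ⟨N - k.val, Nat.sub_lt k.pos hk⟩ = xi N m k := by
  simp only [xi]
  rw [show (((⟨N - k.val, Nat.sub_lt k.pos hk⟩ : Fin N) : ℕ) : ℝ) * m * (2 * Real.pi / N)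
      = (m : ℝ) * ((N - k.val : ℕ) : ℝ) * (2 * Real.pi / N) by push_cast; ring]
  rw [cos_fold N m hN k.val (le_of_lt k.isLt)]
  congr 1
  push_cast; ring

lemma Sw_zero (N n : ℕ) (hN : 0 < N) (h2n : 2 * n ≤ N) (c : ℕ → ℝ) (i : Fin n) :
    ∑ k : Fin N, Stilde N n i k *
      ((∑ m ∈ Finset.Icc n (N / 2), c m * xi N m k : ℝ) : ℂ) = 0 := by
  have hterm : ∀ k : Fin N, Stilde N n i k *
      ((∑ m ∈ Finset.Icc n (N / 2), c m * xi N m k : ℝ) : ℂ)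
      = ∑ m ∈ Finset.Icc n (N / 2), (c m : ℂ) * (Stilde N n i k * ((xi N m k : ℝ) : ℂ)) := by
    intro k
    rw [Complex.ofReal_sum, Finset.mul_sum]
    exact Finset.sum_congr rfl fun m _ => by push_cast; ring
  rw [Finset.sum_congr rfl fun k _ => hterm k, Finset.sum_comm]
  refine Finset.sum_eq_zero fun m hm => ?_
  simp only [Finset.mem_Icc] at hm
  rw [← Finset.mul_sum]
  have hz := Sxi_zero N n hN i m hm.1 (by omega) h2n
  simp only [Matrix.mulVec, dotProduct] at hz
  rw [hz, mul_zero]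

end Aux

/-- for even `N ≥ 2n`, `r ∈ ℱ` and `x* ∈ X̃(r)`, the solution set of
`S̃x = r` with the symmetry constraint is `x* ⊕ span{ξ_n,…,ξ_{N/2}}`; the `ξ_m`
(for `n ≤ m ≤ N/2`) are linearly independent, so this set is an affine subspace of
dimension `N/2 - n + 1`. -/
theorem stmt7 (N n : ℕ) (hn : 1 ≤ n) (h2n : 2 * n ≤ N) (hN : Even N)
    (C : ℝ) (hC : 0 < C) (r : Fin n → ℝ) (hr : r ∈ Fset N n C)
    (xstar : Fin N → ℝ) (hx : xstar ∈ Xset N n r) :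
    ({x : Fin N → ℝ |
        (Stilde N n).mulVec (fun k => (x k : ℂ)) = (fun i => (r i : ℂ)) ∧
        ∀ k : Fin N, ∀ hk : 1 ≤ k.val, x k = x ⟨N - k.val, Nat.sub_lt k.pos hk⟩} =
      {x : Fin N → ℝ | ∃ c : ℕ → ℝ,
        x = xstar + fun t => ∑ m ∈ Finset.Icc n (N / 2), c m * xi N m t}) ∧
    LinearIndependent ℝ (fun m : {m : ℕ // m ∈ Finset.Icc n (N / 2)} => xi N m.val) ∧
    Module.finrank ℝ (vectorSpan ℝ
      {x : Fin N → ℝ |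
        (Stilde N n).mulVec (fun k => (x k : ℂ)) = (fun i => (r i : ℂ)) ∧
        ∀ k : Fin N, ∀ hk : 1 ≤ k.val, x k = x ⟨N - k.val, Nat.sub_lt k.pos hk⟩})
      = N / 2 - n + 1 := by
  have hN0 : 0 < N := by omega
  obtain ⟨hxS, hxpos, hxsym⟩ := hx
  have hseteq : ({x : Fin N → ℝ |
        (Stilde N n).mulVec (fun k => (x k : ℂ)) = (fun i => (r i : ℂ)) ∧
        ∀ k : Fin N, ∀ hk : 1 ≤ k.val, x k = x ⟨N - k.val, Nat.sub_lt k.pos hk⟩} =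
      {x : Fin N → ℝ | ∃ c : ℕ → ℝ,
        x = xstar + fun t => ∑ m ∈ Finset.Icc n (N / 2), c m * xi N m t}) := by
    ext x
    simp only [Set.mem_setOf_eq]
    constructor
    · rintro ⟨hxe, hxs⟩
      set y : Fin N → ℝ := fun t => x t - xstar t with hy
      have hysym : ∀ k : Fin N, ∀ hk : 1 ≤ k.val, y k = y ⟨N - k.val, Nat.sub_lt k.pos hk⟩ := by
        intro k hk
        simp only [hy]
        rw [← hxs k hk, ← hxsym k hk]
      have hyrow : ∀ i : Fin n, ((Stilde N n).mulVec (fun k => ((y k : ℝ) : ℂ)) i) = 0 := by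
        intro i
        have h1 := congrFun hxe i
        have h2 := congrFun hxS i
        simp only [Matrix.mulVec, dotProduct] at h1 h2 ⊢
        have hsplit : ∀ k : Fin N, Stilde N n i k * ((y k : ℝ) : ℂ)
            = Stilde N n i k * (x k : ℂ) - Stilde N n i k * (xstar k : ℂ) := by
          intro k
          simp only [hy]
          push_cast
          ring
        rw [Finset.sum_congr rfl fun k _ => hsplit k, Finset.sum_sub_distrib, h1, h2, sub_self]
      refine ⟨fun m => (if m = 0 ∨ 2 * m = N then (1 : ℝ) else 2) / N *
        ∑ k : Fin N, y k * Real.cos ((k.val : ℝ) * m * (2 * Real.pi / N)), ?_⟩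
      funext t
      show x t = xstar t + ∑ m ∈ Finset.Icc n (N / 2),
        ((if m = 0 ∨ 2 * m = N then (1 : ℝ) else 2) / N *
          ∑ k : Fin N, y k * Real.cos ((k.val : ℝ) * m * (2 * Real.pi / N))) * xi N m t
      have hzero : ∀ m ∈ Finset.Icc 0 (N / 2), m ∉ Finset.Icc n (N / 2) →
          ((if m = 0 ∨ 2 * m = N then (1 : ℝ) else 2) / N *
            ∑ k : Fin N, y k * Real.cos ((k.val : ℝ) * m * (2 * Real.pi / N))) * xi N m t = 0 := by
        intro m hm hm'
        simp only [Finset.mem_Icc] at hm hm'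
        have hmn : m < n := by omega
        have hre := congrArg Complex.re (hyrow ⟨m, by omega⟩)
        rw [rowReal] at hre
        simp only [Complex.zero_re] at hre
        rw [show ∑ k : Fin N, y k * Real.cos ((k.val : ℝ) * m * (2 * Real.pi / N)) = 0 from hre]
        rw [mul_zero, zero_mul]
      have hsum : ∑ m ∈ Finset.Icc n (N / 2),
          ((if m = 0 ∨ 2 * m = N then (1 : ℝ) else 2) / N *
            ∑ k : Fin N, y k * Real.cos ((k.val : ℝ) * m * (2 * Real.pi / N))) * xi N m t
          = ∑ m ∈ Finset.Icc 0 (N / 2),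
          ((if m = 0 ∨ 2 * m = N then (1 : ℝ) else 2) / N *
            ∑ k : Fin N, y k * Real.cos ((k.val : ℝ) * m * (2 * Real.pi / N))) * xi N m t :=
        Finset.sum_subset (by intro m hm; simp only [Finset.mem_Icc] at *; omega) hzero
      have hinv := inversion N hN0 y hysym t
      rw [hsum]
      simp only [xi]
      rw [hinv]
      simp only [hy]
      ring
    · rintro ⟨c, rfl⟩
      constructor
      · funext i
        have h2 := congrFun hxS i
        simp only [Matrix.mulVec, dotProduct, Pi.add_apply] at h2 ⊢
        have hsplit : ∀ k : Fin N, Stilde N n i k *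
            ((xstar k + ∑ m ∈ Finset.Icc n (N / 2), c m * xi N m k : ℝ) : ℂ)
            = Stilde N n i k * (xstar k : ℂ) +
              Stilde N n i k * ((∑ m ∈ Finset.Icc n (N / 2), c m * xi N m k : ℝ) : ℂ) := by
          intro k; push_cast; ring
        rw [Finset.sum_congr rfl fun k _ => hsplit k, Finset.sum_add_distrib, h2,
          Sw_zero N n hN0 h2n c i, add_zero]
      · intro k hk
        simp only [Pi.add_apply]
        rw [hxsym k hk]
        congr 1
        refine Finset.sum_congr rfl fun m _ => ?_
        rw [xi_symm N m hN0 k hk]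
  have hmemT : ∀ x : Fin N → ℝ,
      (∃ c : ℕ → ℝ, x = xstar + fun t => ∑ m ∈ Finset.Icc n (N / 2), c m * xi N m t) ↔
        x - xstar ∈ Submodule.span ℝ
          (Set.range (fun m : {m : ℕ // m ∈ Finset.Icc n (N / 2)} => xi N m.val)) := by
    intro x
    constructor
    · rintro ⟨c, rfl⟩
      have heq : (xstar + fun t => ∑ m ∈ Finset.Icc n (N / 2), c m * xi N m t) - xstar
          = fun t => ∑ m ∈ Finset.Icc n (N / 2), c m * xi N m t := by
        funext t; simp
      rw [heq, Submodule.mem_span_range_iff_exists_fun]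
      refine ⟨fun i => c i.val, ?_⟩
      funext t
      simp only [Finset.sum_apply, Pi.smul_apply, smul_eq_mul]
      exact Finset.sum_attach _ (fun m => c m * xi N m t)
    · intro hv
      rw [Submodule.mem_span_range_iff_exists_fun] at hv
      obtain ⟨c', hc'⟩ := hv
      refine ⟨fun m => if h : m ∈ Finset.Icc n (N / 2) then c' ⟨m, h⟩ else 0, ?_⟩
      funext t
      have hct : ∑ i ∈ (Finset.Icc n (N / 2)).attach, c' i * xi N i.val t = x t - xstar t := by
        have := congrFun hc' t
        simp only [Finset.sum_apply, Pi.smul_apply, smul_eq_mul, Pi.sub_apply] at this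
        exact this
      show x t = xstar t + ∑ m ∈ Finset.Icc n (N / 2),
        (if h : m ∈ Finset.Icc n (N / 2) then c' ⟨m, h⟩ else 0) * xi N m t
      have hs : ∑ m ∈ Finset.Icc n (N / 2),
          (if h : m ∈ Finset.Icc n (N / 2) then c' ⟨m, h⟩ else 0) * xi N m t
          = ∑ i ∈ (Finset.Icc n (N / 2)).attach, c' i * xi N i.val t := by
        rw [← Finset.sum_attach (Finset.Icc n (N / 2))
          (fun m => (if h : m ∈ Finset.Icc n (N / 2) then c' ⟨m, h⟩ else 0) * xi N m t)]
        refine Finset.sum_congr rfl fun i _ => ?_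
        rw [dif_pos i.property]
      rw [hs, hct]
      ring
  refine ⟨hseteq, xi_li N n hN0 hn, ?_⟩
  have hVS : vectorSpan ℝ
      {x : Fin N → ℝ |
        (Stilde N n).mulVec (fun k => (x k : ℂ)) = (fun i => (r i : ℂ)) ∧
        ∀ k : Fin N, ∀ hk : 1 ≤ k.val, x k = x ⟨N - k.val, Nat.sub_lt k.pos hk⟩}
      = Submodule.span ℝ
          (Set.range (fun m : {m : ℕ // m ∈ Finset.Icc n (N / 2)} => xi N m.val)) := by
    rw [hseteq, vectorSpan_def]
    apply le_antisymm
    · apply Submodule.span_le.mpr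
      rintro z ⟨a, ha, b, hb, rfl⟩
      simp only [Set.mem_setOf_eq] at ha hb
      have ha' := (hmemT a).mp ha
      have hb' := (hmemT b).mp hb
      have hmem := Submodule.sub_mem _ ha' hb'
      have heq : a -ᵥ b = (a - xstar) - (b - xstar) := by
        rw [vsub_eq_sub, sub_sub_sub_cancel_right]
      show a -ᵥ b ∈ _
      rw [heq]
      exact hmem
    · apply Submodule.span_le.mpr
      rintro z ⟨m, rfl⟩
      have h1 : xstar ∈ {x : Fin N → ℝ | ∃ c : ℕ → ℝ,
          x = xstar + fun t => ∑ m ∈ Finset.Icc n (N / 2), c m * xi N m t} :=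
        (hmemT xstar).mpr (by simp)
      have h2 : xstar + xi N m.val ∈ {x : Fin N → ℝ | ∃ c : ℕ → ℝ,
          x = xstar + fun t => ∑ m ∈ Finset.Icc n (N / 2), c m * xi N m t} :=
        (hmemT _).mpr (by
          rw [add_sub_cancel_left]
          exact Submodule.subset_span ⟨m, rfl⟩)
      apply Submodule.subset_span
      refine Set.mem_vsub.mpr ⟨xstar + xi N m.val, h2, xstar, h1, ?_⟩
      rw [vsub_eq_sub, add_sub_cancel_left]
  rw [hVS, finrank_span_eq_card (xi_li N n hN0 hn), Fintype.card_coe, Nat.card_Icc]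
  omega
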